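/- Let X = P^n be the n-dimensional projective space over k and let x ∈ P^n be a closed point. Then the line bundle O(m) separates p^e-Frobenius jets at x if and only if m ≥ n(p^e − 1); consequently, the Frobenius-Seshadri constant of O(1) at x equals 1/n. -/

import Mathlib

open MvPolynomial

/-- The line bundle `O(m)` on `ℙⁿ_k` separates `pᵉ`-Frobenius jets at the closed point
`x` with homogeneous coordinates `a : Fin (n+1) → k` (normalized in the chart `X_i ≠ 0`,
so `a i ≠ 0`):  in the local coordinates `y_j = X_j/X_i - a_j/a_i` (for `j ≠ i`) at `x`,
a global section of `O(m)` is `f/X_iᵐ` with `f` homogeneous of degree `m`, and its germ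
at `x` is obtained from `f` by substituting `X_i ↦ 1` and `X_j ↦ a_j/a_i + y_j`.
The condition below says exactly that the restriction map
`H⁰(ℙⁿ, O(m)) → H⁰(ℙⁿ, O(m) ⊗ O/m_x^{[pᵉ]}) = k[y]/(y₁^{pᵉ}, …, y_n^{pᵉ})`
is surjective. -/
def ProjSpaceSepFrobJets (p : ℕ) (k : Type*) [Field k] {n : ℕ}
    (a : Fin (n + 1) → k) (i : Fin (n + 1)) (m e : ℕ) : Prop :=
  ∀ g : MvPolynomial {j : Fin (n + 1) // j ≠ i} k,
    ∃ f : MvPolynomial (Fin (n + 1)) k, f.IsHomogeneous m ∧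
      Ideal.Quotient.mk
          (Ideal.span (Set.range fun j : {j : Fin (n + 1) // j ≠ i} =>
            (X j : MvPolynomial {j : Fin (n + 1) // j ≠ i} k) ^ p ^ e))
          (aeval (fun j : Fin (n + 1) =>
            if h : j = i then 1
            else C (a j / a i) + X (⟨j, h⟩ : {j : Fin (n + 1) // j ≠ i})) f) =
        Ideal.Quotient.mk _ g

/-- `s_F(O(m); x)` : the largest `e ≥ 1` such that `O(m)` separates `pᵉ`-Frobenius jets
at `x` (and `0` if there is no such `e`). -/
noncomputable def projSpaceSF (p : ℕ) (k : Type*) [Field k] {n : ℕ}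
    (a : Fin (n + 1) → k) (i : Fin (n + 1)) (m : ℕ) : ℕ :=
  sSup {e | 1 ≤ e ∧ ProjSpaceSepFrobJets p k a i m e}

/-- The Frobenius-Seshadri constant `ε_F(O(1); x) = sup_{m ≥ 1} (p^{s_F(O(m); x)} - 1)/m`
of `O(1)` on `ℙⁿ_k` at the point `x` with homogeneous coordinates `a`. -/
noncomputable def projSpaceEpsF (p : ℕ) (k : Type*) [Field k] {n : ℕ}
    (a : Fin (n + 1) → k) (i : Fin (n + 1)) : ℝ :=
  ⨆ m : ℕ+, ((p : ℝ) ^ projSpaceSF p k a i (m : ℕ) - 1) / (m : ℝ)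

section Aux

variable {p : ℕ} {k : Type*} [Field k] {n : ℕ}

private lemma card_ne (i : Fin (n + 1)) : Fintype.card {j : Fin (n + 1) // j ≠ i} = n := by
  simp [Fintype.card_subtype_compl]

private lemma sep_of_le (a : Fin (n + 1) → k) (i : Fin (n + 1)) (m e : ℕ)
    (hm : n * (p ^ e - 1) ≤ m) : ProjSpaceSepFrobJets p k a i m e := by
  classical
  intro g
  set T : Finset ({j : Fin (n + 1) // j ≠ i} →₀ ℕ) :=
    g.support.filter (fun α => ∀ j, α j < p ^ e) with hT
  -- degree bound for α ∈ T
  have hdeg : ∀ α ∈ T, (∑ j : {j : Fin (n + 1) // j ≠ i}, α j) ≤ m := by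
    intro α hα
    have hα' : ∀ j, α j < p ^ e := (Finset.mem_filter.mp hα).2
    calc (∑ j : {j : Fin (n + 1) // j ≠ i}, α j)
        ≤ ∑ _j : {j : Fin (n + 1) // j ≠ i}, (p ^ e - 1) :=
          Finset.sum_le_sum fun j _ => Nat.le_pred_of_lt (hα' j)
      _ = n * (p ^ e - 1) := by
          rw [Finset.sum_const, smul_eq_mul, Finset.card_univ, card_ne]
      _ ≤ m := hm
  -- the homogenized lifts
  set F : ({j : Fin (n + 1) // j ≠ i} →₀ ℕ) → MvPolynomial (Fin (n + 1)) k :=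
    fun α => X i ^ (m - ∑ j : {j : Fin (n + 1) // j ≠ i}, α j) *
      ∏ j : {j : Fin (n + 1) // j ≠ i},
        (X (j : Fin (n + 1)) - C (a j / a i) * X i) ^ α j with hF
  refine ⟨∑ α ∈ T, C (coeff α g) * F α, ?_, ?_⟩
  · apply MvPolynomial.IsHomogeneous.sum
    intro α hα
    apply MvPolynomial.IsHomogeneous.C_mul
    have h2 : (∏ j : {j : Fin (n + 1) // j ≠ i},
        (X (j : Fin (n + 1)) - C (a j / a i) * X i) ^ α j).IsHomogeneous
        (∑ j : {j : Fin (n + 1) // j ≠ i}, α j) := by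
      apply MvPolynomial.IsHomogeneous.prod
      intro j _
      simpa using ((isHomogeneous_X k (j : Fin (n + 1))).sub
        (isHomogeneous_C_mul_X (a j / a i) i)).pow (α j)
    have := (isHomogeneous_X_pow (R := k) i
      (m - ∑ j : {j : Fin (n + 1) // j ≠ i}, α j)).mul h2
    rwa [Nat.sub_add_cancel (hdeg α hα)] at this
  · rw [Ideal.Quotient.eq]
    have haX : ∀ j : {j : Fin (n + 1) // j ≠ i},
        aeval (fun j : Fin (n + 1) =>
          if h : j = i then 1
          else C (a j / a i) + X (⟨j, h⟩ : {j : Fin (n + 1) // j ≠ i}))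
          (X (j : Fin (n + 1)) - C (a j / a i) * X i) = X j := by
      intro j
      rw [map_sub, map_mul, aeval_X, aeval_X, aeval_C, dif_neg j.2, dif_pos rfl, mul_one]
      simp [MvPolynomial.algebraMap_eq]
    have haF : ∀ α ∈ T,
        aeval (fun j : Fin (n + 1) =>
          if h : j = i then 1
          else C (a j / a i) + X (⟨j, h⟩ : {j : Fin (n + 1) // j ≠ i})) (F α)
          = monomial α (1 : k) := by
      intro α _
      rw [hF, map_mul, map_pow, aeval_X, dif_pos rfl, one_pow, one_mul, map_prod]
      simp_rw [map_pow, haX]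
      rw [monomial_eq, C_1, one_mul, Finsupp.prod_fintype _ _ (fun j => pow_zero _)]
    rw [map_sum]
    have : ∑ α ∈ T, (aeval (fun j : Fin (n + 1) =>
        if h : j = i then 1
        else C (a j / a i) + X (⟨j, h⟩ : {j : Fin (n + 1) // j ≠ i})))
        (C (coeff α g) * F α) = ∑ α ∈ T, monomial α (coeff α g) := by
      refine Finset.sum_congr rfl fun α hα => ?_
      rw [map_mul, aeval_C, haF α hα, MvPolynomial.algebraMap_eq, C_mul_monomial, mul_one]
    rw [this]
    have hsplit : (∑ α ∈ T, monomial α (coeff α g)) +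
        ∑ α ∈ g.support.filter (fun α => ¬ ∀ j, α j < p ^ e), monomial α (coeff α g) = g := by
      rw [hT, Finset.sum_filter_add_sum_filter_not, support_sum_monomial_coeff]
    have hrw : (∑ α ∈ T, monomial α (coeff α g)) - g =
        -∑ α ∈ g.support.filter (fun α => ¬ ∀ j, α j < p ^ e), monomial α (coeff α g) := by
      linear_combination hsplit
    rw [hrw]
    refine neg_mem (Ideal.sum_mem _ fun α hα => ?_)
    obtain ⟨j, hj⟩ := not_forall.mp (Finset.mem_filter.mp hα).2
    push_neg at hj
    have : monomial α (coeff α g) =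
        X j ^ p ^ e * monomial (α - Finsupp.single j (p ^ e)) (coeff α g) := by
      rw [X_pow_eq_monomial, monomial_mul, one_mul,
        add_tsub_cancel_of_le (Finsupp.single_le_iff.mpr hj)]
    rw [this]
    exact Ideal.mul_mem_right _ _ (Ideal.subset_span ⟨j, rfl⟩)


private lemma td_aeval (a : Fin (n + 1) → k) (i : Fin (n + 1)) {m : ℕ}
    {f : MvPolynomial (Fin (n + 1)) k} (hf : f.IsHomogeneous m) :
    (aeval (fun j : Fin (n + 1) =>
      if h : j = i then 1
      else C (a j / a i) + X (⟨j, h⟩ : {j : Fin (n + 1) // j ≠ i})) f).totalDegree ≤ m := by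
  classical
  set Φ : Fin (n + 1) → MvPolynomial {j : Fin (n + 1) // j ≠ i} k :=
    fun j : Fin (n + 1) =>
      if h : j = i then 1
      else C (a j / a i) + X (⟨j, h⟩ : {j : Fin (n + 1) // j ≠ i}) with hΦ
  have hΦd : ∀ j, (Φ j).totalDegree ≤ 1 := by
    intro j
    rw [hΦ]
    simp only []
    by_cases h : j = i
    · simp [h]
    · rw [dif_neg h]
      refine (totalDegree_add _ _).trans ?_
      simp [totalDegree_C, totalDegree_X]
  conv_lhs => rw [← support_sum_monomial_coeff f, map_sum]
  apply totalDegree_finsetSum_le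
  intro α hα
  have hαm : ∑ j ∈ α.support, α j = m := by
    have := hf (mem_support_iff.mp hα)
    simpa [Finsupp.weight_apply, Finsupp.sum] using this
  rw [aeval_monomial]
  refine (totalDegree_mul _ _).trans ?_
  have h1 : (algebraMap k (MvPolynomial {j : Fin (n + 1) // j ≠ i} k)
      (coeff α f)).totalDegree = 0 := by
    rw [MvPolynomial.algebraMap_eq, totalDegree_C]
  rw [h1, zero_add, Finsupp.prod]
  refine (totalDegree_finset_prod _ _).trans ?_
  calc ∑ j ∈ α.support, (Φ j ^ α j).totalDegree
      ≤ ∑ j ∈ α.support, α j * (Φ j).totalDegree :=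
        Finset.sum_le_sum fun j _ => totalDegree_pow _ _
    _ ≤ ∑ j ∈ α.support, α j * 1 :=
        Finset.sum_le_sum fun j _ => Nat.mul_le_mul_left _ (hΦd j)
    _ = m := by simpa using hαm


private lemma le_of_sep (hp : p.Prime) (a : Fin (n + 1) → k) (i : Fin (n + 1)) (m e : ℕ)
    (H : ProjSpaceSepFrobJets p k a i m e) : n * (p ^ e - 1) ≤ m := by
  classical
  by_contra hm
  push_neg at hm
  set β : {j : Fin (n + 1) // j ≠ i} →₀ ℕ :=
    Finsupp.equivFunOnFinite.symm (fun _ => p ^ e - 1) with hβ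
  have hβj : ∀ j, β j = p ^ e - 1 := fun j => rfl
  have hβsum : ∑ j ∈ β.support, β j = n * (p ^ e - 1) := by
    rw [Finset.sum_subset (Finset.subset_univ β.support)
      (fun x _ hx => by simpa using Finsupp.notMem_support_iff.mp hx)]
    simp [hβj, Finset.sum_const, Finset.card_univ, card_ne i, mul_comm]
  obtain ⟨f, hf, heq⟩ := H (monomial β 1)
  rw [Ideal.Quotient.eq, Ideal.mem_span_range_iff_exists_fun] at heq
  obtain ⟨c, hc⟩ := heq
  have h0 : coeff β (∑ j : {j : Fin (n + 1) // j ≠ i}, c j * X j ^ p ^ e) = 0 := by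
    rw [coeff_sum]
    refine Finset.sum_eq_zero fun j _ => ?_
    rw [X_pow_eq_monomial, coeff_mul_monomial']
    have hne : ¬ Finsupp.single j (p ^ e) ≤ β := by
      rw [Finsupp.single_le_iff, hβj]
      exact Nat.not_le.mpr (Nat.sub_lt (pow_pos hp.pos e) one_pos)
    rw [if_neg hne]
  have h2 : coeff β (aeval (fun j : Fin (n + 1) =>
      if h : j = i then 1
      else C (a j / a i) + X (⟨j, h⟩ : {j : Fin (n + 1) // j ≠ i})) f) = 0 :=
    coeff_eq_zero_of_totalDegree_lt (lt_of_le_of_lt (td_aeval a i hf) (hβsum ▸ hm))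
  have hfin := congrArg (coeff β) hc
  rw [h0, coeff_sub, h2, coeff_monomial, if_pos rfl] at hfin
  simp at hfin


end Aux

/-- On `X = ℙⁿ` over an algebraically closed field `k` of characteristic `p > 0`, for any
closed point `x ∈ ℙⁿ` (given by homogeneous coordinates `a` with `a i ≠ 0`): the line
bundle `O(m)` separates `pᵉ`-Frobenius jets at `x` if and only if `m ≥ n(pᵉ - 1)`;
consequently the Frobenius-Seshadri constant of `O(1)` at `x` equals `1/n`. -/

theorem projSpace_sepFrobJets_iff_and_epsF {p : ℕ} (hp : p.Prime)
    (k : Type*) [Field k] [IsAlgClosed k] [CharP k p]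
    (n : ℕ) (hn : 1 ≤ n) (a : Fin (n + 1) → k) (i : Fin (n + 1)) (ha : a i ≠ 0) :
    (∀ m e : ℕ, 1 ≤ e →
      (ProjSpaceSepFrobJets p k a i m e ↔ n * (p ^ e - 1) ≤ m)) ∧
    projSpaceEpsF p k a i = 1 / (n : ℝ) := by
  have hiff : ∀ m e : ℕ, (ProjSpaceSepFrobJets p k a i m e ↔ n * (p ^ e - 1) ≤ m) :=
    fun m e => ⟨le_of_sep hp a i m e, sep_of_le a i m e⟩
  refine ⟨fun m e _ => hiff m e, ?_⟩
  have hset : ∀ m : ℕ, {e | 1 ≤ e ∧ ProjSpaceSepFrobJets p k a i m e}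
      = {e | 1 ≤ e ∧ n * (p ^ e - 1) ≤ m} := by
    intro m; ext e
    exact and_congr_right fun _ => hiff m e
  have hbdd : ∀ m : ℕ, BddAbove {e | 1 ≤ e ∧ n * (p ^ e - 1) ≤ m} := by
    intro m
    refine ⟨m, fun e he => ?_⟩
    calc e ≤ p ^ e - 1 := Nat.le_sub_one_of_lt (Nat.lt_pow_self hp.one_lt)
      _ ≤ n * (p ^ e - 1) := Nat.le_mul_of_pos_left _ hn
      _ ≤ m := he.2
  have hSF : ∀ m : ℕ, n * (p ^ (projSpaceSF p k a i m) - 1) ≤ m := by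
    intro m
    rw [projSpaceSF, hset]
    by_cases hne : {e | 1 ≤ e ∧ n * (p ^ e - 1) ≤ m}.Nonempty
    · exact (Nat.sSup_mem hne (hbdd m)).2
    · rw [Set.not_nonempty_iff_eq_empty.mp hne, csSup_empty]
      simp
  have hp1 : (1:ℕ) ≤ p - 1 := Nat.le_sub_one_of_lt hp.one_lt
  have hm0pos : 0 < n * (p - 1) := Nat.mul_pos hn hp1
  have hm0 : (1:ℕ) ≤ projSpaceSF p k a i (n * (p - 1)) := by
    rw [projSpaceSF, hset]
    exact le_csSup (hbdd _) ⟨le_refl 1, by rw [pow_one]⟩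
  have hnR : (0:ℝ) < n := by exact_mod_cast hn
  have hupper : ∀ m : ℕ+,
      ((p : ℝ) ^ projSpaceSF p k a i (m : ℕ) - 1) / (m : ℝ) ≤ 1 / (n : ℝ) := by
    intro m
    have hmR : (0:ℝ) < (m : ℕ) := by exact_mod_cast m.pos
    rw [div_le_div_iff₀ hmR hnR]
    have h := hSF (m : ℕ)
    have h' : (n:ℝ) * ((p : ℝ) ^ projSpaceSF p k a i (m : ℕ) - 1) ≤ (m : ℕ) := by
      have hps : (1:ℕ) ≤ p ^ projSpaceSF p k a i (m : ℕ) := Nat.one_le_pow _ _ hp.pos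
      calc (n:ℝ) * ((p : ℝ) ^ projSpaceSF p k a i (m : ℕ) - 1)
          = ((n * (p ^ projSpaceSF p k a i (m : ℕ) - 1) : ℕ) : ℝ) := by
            push_cast [Nat.cast_sub hps]; ring
        _ ≤ (m : ℕ) := by exact_mod_cast h
    linarith
  have hlower : (1 : ℝ) / (n : ℝ) ≤
      ((p : ℝ) ^ projSpaceSF p k a i ((⟨n * (p - 1), hm0pos⟩ : ℕ+) : ℕ) - 1) /
        ((⟨n * (p - 1), hm0pos⟩ : ℕ+) : ℝ) := by
    have hcast : (((⟨n * (p - 1), hm0pos⟩ : ℕ+) : ℕ) : ℝ) = (n : ℝ) * ((p : ℝ) - 1) := by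
      push_cast [Nat.cast_sub hp.one_lt.le]
      ring
    have hmR : (0:ℝ) < (((⟨n * (p - 1), hm0pos⟩ : ℕ+) : ℕ) : ℝ) := by
      exact_mod_cast hm0pos
    have hps : (p : ℝ) ≤ (p : ℝ) ^ projSpaceSF p k a i ((⟨n * (p - 1), hm0pos⟩ : ℕ+) : ℕ) :=
      le_self_pow₀ (by exact_mod_cast hp.one_lt.le) (Nat.one_le_iff_ne_zero.mp hm0)
    rw [div_le_div_iff₀ hnR hmR, hcast]
    have hpR : (1:ℝ) < p := by exact_mod_cast hp.one_lt
    nlinarith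
  rw [projSpaceEpsF]
  apply le_antisymm
  · exact ciSup_le hupper
  · calc (1:ℝ) / (n : ℝ)
        ≤ ((p : ℝ) ^ projSpaceSF p k a i ((⟨n * (p - 1), hm0pos⟩ : ℕ+) : ℕ) - 1) /
          ((⟨n * (p - 1), hm0pos⟩ : ℕ+) : ℝ) := hlower
      _ ≤ _ := le_ciSup ⟨1 / (n : ℝ), Set.forall_mem_range.mpr hupper⟩ _
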